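/- Let ρ be the qubit density matrix with Bloch parameters (n, θ, φ), where 0 ≤ n ≤ 1, 0 ≤ θ ≤ π/2, and assume (n, θ) ≠ (1, 0). Let θ_o = arccos(n cos θ), and define χ₁ = (cos(θ_o/2), e^{iφ} sin(θ_o/2))ᵀ, χ₂ = (cos(θ_o/2), −e^{iφ} sin(θ_o/2))ᵀ, p₁ = (1 + n sin θ / sin θ_o)/2, p₂ = (1 − n sin θ / sin θ_o)/2. Then 0 ≤ p₂ ≤ p₁ ≤ 1, p₁ + p₂ = 1, ρ = p₁ χ₁χ₁* + p₂ χ₂χ₂*, and |χ_k(0)|² = ρ₀₀ = cos²(θ_o/2) for k = 1, 2; hence for every symmetric concave f on Ω₂ this decomposition D^(M) attains the maximal average coherence f(cos²(θ_o/2), sin²(θ_o/2)) = f(ρ₀₀, ρ₁₁). (The optimal decomposition D^(M).) -/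

import Mathlib

open Matrix BigOperators
open scoped ComplexOrder

noncomputable section

/-- A symmetric function: invariant under all coordinate permutations. -/
def SymmetricFn {n : ℕ} (f : (Fin n → ℝ) → ℝ) : Prop :=
  ∀ (σ : Equiv.Perm (Fin n)) (x : Fin n → ℝ), f (x ∘ σ) = f x

/-- A density matrix: positive semidefinite with trace one. -/
def IsDensityMatrix {n : ℕ} (ρ : Matrix (Fin n) (Fin n) ℂ) : Prop :=
  ρ.PosSemidef ∧ ρ.trace = 1

/-- The rank-one projection `ψ ψ*` associated to a vector `ψ ∈ ℂⁿ`. -/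
def outer {n : ℕ} (ψ : Fin n → ℂ) : Matrix (Fin n) (Fin n) ℂ :=
  Matrix.vecMulVec ψ (fun i => starRingEnd ℂ (ψ i))

/-- `(p, ψ)` is a pure state decomposition of `ρ`. -/
def IsDecomposition {n m : ℕ} (ρ : Matrix (Fin n) (Fin n) ℂ)
    (p : Fin m → ℝ) (ψ : Fin m → Fin n → ℂ) : Prop :=
  (∀ k, 0 ≤ p k) ∧ (∑ k, p k = 1) ∧ (∀ k, ∑ i, ‖ψ k i‖ ^ 2 = 1) ∧
    ρ = ∑ k, (p k : ℂ) • outer (ψ k)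

/-- The coherence vector `(|ψ₀|², …, |ψ_{n-1}|²)` of a vector `ψ`. -/
def cohVec {n : ℕ} (ψ : Fin n → ℂ) : Fin n → ℝ := fun i => ‖ψ i‖ ^ 2

/-- The average coherence of a pure state decomposition with respect to `f`. -/
def avgCoh {n m : ℕ} (f : (Fin n → ℝ) → ℝ) (p : Fin m → ℝ)
    (ψ : Fin m → Fin n → ℂ) : ℝ :=
  ∑ k, p k * f (cohVec (ψ k))


/-- The Pauli matrices. -/
def pauli1 : Matrix (Fin 2) (Fin 2) ℂ := !![0, 1; 1, 0]
def pauli2 : Matrix (Fin 2) (Fin 2) ℂ := !![0, -Complex.I; Complex.I, 0]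
def pauli3 : Matrix (Fin 2) (Fin 2) ℂ := !![1, 0; 0, -1]

/-- The qubit density matrix with Bloch parameters `(r, θ, φ)`:
`ρ = (1/2)(I + r sinθ cosφ σ₁ + r sinθ sinφ σ₂ + r cosθ σ₃)`. -/
def bloch (r θ φ : ℝ) : Matrix (Fin 2) (Fin 2) ℂ :=
  (1 / 2 : ℂ) • ((1 : Matrix (Fin 2) (Fin 2) ℂ)
    + (r * Real.sin θ * Real.cos φ) • pauli1
    + (r * Real.sin θ * Real.sin φ) • pauli2
    + (r * Real.cos θ) • pauli3)

set_option maxHeartbeats 1000000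

/-- The optimal decomposition `D^(M)` of a qubit state with Bloch parameters
`(n, θ, φ)`, `0 ≤ n ≤ 1`, `0 ≤ θ ≤ π/2`, `(n, θ) ≠ (1, 0)`: with
`θ_o = arccos(n cos θ)`, the states `χ₁ = (cos(θ_o/2), e^{iφ} sin(θ_o/2))`,
`χ₂ = (cos(θ_o/2), −e^{iφ} sin(θ_o/2))` with weights `(1 ± n sinθ/sin θ_o)/2`
decompose `ρ`, share its diagonal, and attain the maximal average coherence
`f(cos²(θ_o/2), sin²(θ_o/2)) = f(ρ₀₀, ρ₁₁)` for every symmetric concave `f`. -/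
theorem optimal_decomposition_DM (n θ φ : ℝ)
    (hn0 : 0 ≤ n) (hn1 : n ≤ 1) (hθ0 : 0 ≤ θ) (hθ1 : θ ≤ Real.pi / 2)
    (hne : ¬(n = 1 ∧ θ = 0)) :
    let ρ := bloch n θ φ
    let θo := Real.arccos (n * Real.cos θ)
    let χ₁ : Fin 2 → ℂ :=
      ![(Real.cos (θo / 2) : ℂ),
        Complex.exp (Complex.I * φ) * (Real.sin (θo / 2) : ℂ)]
    let χ₂ : Fin 2 → ℂ :=
      ![(Real.cos (θo / 2) : ℂ),
        -(Complex.exp (Complex.I * φ) * (Real.sin (θo / 2) : ℂ))]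
    let p₁ : ℝ := (1 + n * Real.sin θ / Real.sin θo) / 2
    let p₂ : ℝ := (1 - n * Real.sin θ / Real.sin θo) / 2
    (0 ≤ p₂ ∧ p₂ ≤ p₁ ∧ p₁ ≤ 1) ∧ p₁ + p₂ = 1 ∧
    ρ = (p₁ : ℂ) • outer χ₁ + (p₂ : ℂ) • outer χ₂ ∧
    (‖χ₁ 0‖ ^ 2 = (ρ 0 0).re ∧ ‖χ₂ 0‖ ^ 2 = (ρ 0 0).re ∧
      (ρ 0 0).re = Real.cos (θo / 2) ^ 2) ∧
    ∀ f : (Fin 2 → ℝ) → ℝ, SymmetricFn f → ConcaveOn ℝ (stdSimplex ℝ (Fin 2)) f →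
      p₁ * f (cohVec χ₁) + p₂ * f (cohVec χ₂) =
        f ![Real.cos (θo / 2) ^ 2, Real.sin (θo / 2) ^ 2] ∧
      f ![Real.cos (θo / 2) ^ 2, Real.sin (θo / 2) ^ 2] = f (fun i => (ρ i i).re) ∧
      IsGreatest {c : ℝ | ∃ (m : ℕ) (p : Fin m → ℝ) (ψ : Fin m → Fin 2 → ℂ),
          IsDecomposition ρ p ψ ∧ c = avgCoh f p ψ}
        (f ![Real.cos (θo / 2) ^ 2, Real.sin (θo / 2) ^ 2]) := by
  intro ρ θo χ₁ χ₂ p₁ p₂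
  have hpi := Real.pi_pos
  have hcosθ : 0 ≤ Real.cos θ := Real.cos_nonneg_of_mem_Icc ⟨by linarith, hθ1⟩
  have hsinθ : 0 ≤ Real.sin θ := Real.sin_nonneg_of_nonneg_of_le_pi hθ0 (by linarith)
  have hc0 : 0 ≤ n * Real.cos θ := mul_nonneg hn0 hcosθ
  have hc1 : n * Real.cos θ ≤ 1 := by nlinarith [Real.cos_le_one θ]
  have hclt : n * Real.cos θ < 1 := by
    rcases lt_or_eq_of_le hc1 with h | h
    · exact h
    · exfalso; apply hne
      have hcle := Real.cos_le_one θ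
      have hn : n = 1 := by nlinarith
      have hcθ : Real.cos θ = 1 := by nlinarith
      refine ⟨hn, ?_⟩
      have h0 : θ ∈ Set.Icc 0 Real.pi := ⟨hθ0, by linarith⟩
      have h1 : (0:ℝ) ∈ Set.Icc 0 Real.pi := ⟨le_refl 0, by linarith⟩
      exact Real.injOn_cos h0 h1 (by simpa [Real.cos_zero] using hcθ)
  have hcos : Real.cos θo = n * Real.cos θ := Real.cos_arccos (by linarith) hc1
  have hsin : Real.sin θo = Real.sqrt (1 - (n * Real.cos θ) ^ 2) := Real.sin_arccos _
  have hsinpos : 0 < Real.sin θo := by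
    rw [hsin]; apply Real.sqrt_pos.2; nlinarith
  have hns : n * Real.sin θ ≤ Real.sin θo := by
    have hn2 : n ^ 2 ≤ 1 := by nlinarith
    rw [hsin, show n * Real.sin θ = Real.sqrt ((n * Real.sin θ)^2) from
      (Real.sqrt_sq (by positivity)).symm]
    exact Real.sqrt_le_sqrt (by nlinarith [Real.sin_sq_add_cos_sq θ, sq_nonneg (Real.sin θ)])
  have hs0 : 0 ≤ n * Real.sin θ / Real.sin θo := by positivity
  have hs1 : n * Real.sin θ / Real.sin θo ≤ 1 := (div_le_one hsinpos).2 hns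
  have hsmul : n * Real.sin θ / Real.sin θo * Real.sin θo = n * Real.sin θ :=
    div_mul_cancel₀ _ hsinpos.ne'
  have hcos2 : Real.cos (θo / 2) ^ 2 = (1 + n * Real.cos θ) / 2 := by
    rw [Real.cos_sq, show 2 * (θo / 2) = θo by ring, hcos]; ring
  have hsin2 : Real.sin (θo / 2) ^ 2 = (1 - n * Real.cos θ) / 2 := by
    rw [Real.sin_sq, hcos2]; ring
  have hsc : 2 * (Real.sin (θo / 2) * Real.cos (θo / 2)) = Real.sin θo := by
    rw [show Real.sin θo = Real.sin (2 * (θo / 2)) by ring_nf, Real.sin_two_mul]; ring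
  -- bounds on p₁, p₂
  have hp2 : 0 ≤ p₂ := by simp only [p₂]; linarith
  have hp21 : p₂ ≤ p₁ := by simp only [p₁, p₂]; linarith
  have hp11 : p₁ ≤ 1 := by simp only [p₁]; linarith
  have hpsum : p₁ + p₂ = 1 := by simp only [p₁, p₂]; ring
  have hp1 : 0 ≤ p₁ := le_trans hp2 hp21
  -- the decomposition identity
  have he : Complex.exp (Complex.I * (φ:ℂ)) = (Real.cos φ : ℂ) + (Real.sin φ : ℂ) * Complex.I := by
    rw [mul_comm, Complex.exp_mul_I]; push_cast; ring
  have hc2 : ((Real.cos (θo / 2) : ℂ)) ^ 2 = (1 + (n:ℂ) * (Real.cos θ : ℂ)) / 2 := by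
    exact_mod_cast congrArg (Complex.ofReal) hcos2
  have hs2 : ((Real.sin (θo / 2) : ℂ)) ^ 2 = (1 - (n:ℂ) * (Real.cos θ : ℂ)) / 2 := by
    exact_mod_cast congrArg (Complex.ofReal) hsin2
  have hscC : 2 * ((Real.sin (θo / 2) : ℂ) * (Real.cos (θo / 2) : ℂ)) = (Real.sin θo : ℂ) := by
    exact_mod_cast congrArg (Complex.ofReal) hsc
  have hSne : ((Real.sin θo : ℝ) : ℂ) ≠ 0 := by
    exact_mod_cast Complex.ofReal_ne_zero.2 hsinpos.ne'
  have hu : ((Real.sin θo : ℝ) : ℂ)⁻¹ * ((Real.sin θo : ℝ) : ℂ) = 1 := inv_mul_cancel₀ hSne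
  have hφ : ((Real.cos φ : ℝ) : ℂ)^2 + ((Real.sin φ : ℝ) : ℂ)^2 = 1 := by
    exact_mod_cast congrArg (Complex.ofReal) (Real.cos_sq_add_sin_sq φ)
  have hdecomp : ρ = (p₁ : ℂ) • outer χ₁ + (p₂ : ℂ) • outer χ₂ := by
    ext i j
    fin_cases i <;> fin_cases j <;>
      simp [ρ, bloch, outer, Matrix.vecMulVec_apply, χ₁, χ₂, pauli1, pauli2, pauli3, p₁, p₂,
        Matrix.one_apply, he, -Complex.ofReal_cos, -Complex.ofReal_sin, Complex.ofReal_div,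
        Fin.mk_zero, Fin.mk_one, -Matrix.cons_vecMulVec]
    · linear_combination -hc2
    · linear_combination (-((((Real.cos φ:ℂ) - Real.sin φ * Complex.I)) * ((n:ℂ) * (Real.sin θ:ℂ)) * ((Real.sin θo : ℝ) : ℂ)⁻¹)/2) * hscC +
        (-((((Real.cos φ:ℂ) - Real.sin φ * Complex.I)) * ((n:ℂ) * (Real.sin θ:ℂ)))/2) * hu
    · linear_combination (-((((Real.cos φ:ℂ) + Real.sin φ * Complex.I)) * ((n:ℂ) * (Real.sin θ:ℂ)) * ((Real.sin θo : ℝ) : ℂ)⁻¹)/2) * hscC +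
        (-((((Real.cos φ:ℂ) + Real.sin φ * Complex.I)) * ((n:ℂ) * (Real.sin θ:ℂ)))/2) * hu
    · linear_combination -hs2 - ((Real.sin (θo/2) : ℝ):ℂ)^2 * hφ + ((Real.sin (θo/2) : ℝ):ℂ)^2 * ((Real.sin φ : ℝ):ℂ)^2 * Complex.I_sq
  -- norms
  have hnorm0 : ∀ (r : ℝ), ‖(r:ℂ)‖ ^ 2 = r ^ 2 := by
    intro r; rw [Complex.norm_real, Real.norm_eq_abs, sq_abs]
  have hn10 : ‖χ₁ 0‖ ^ 2 = Real.cos (θo / 2) ^ 2 := by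
    simp only [χ₁, Matrix.cons_val_zero]; exact hnorm0 _
  have hn20 : ‖χ₂ 0‖ ^ 2 = Real.cos (θo / 2) ^ 2 := by
    simp only [χ₂, Matrix.cons_val_zero]; exact hnorm0 _
  have hexp1 : ‖Complex.exp (Complex.I * (φ:ℂ))‖ = 1 := by
    rw [Complex.norm_exp]
    simp
  have hn11 : ‖χ₁ 1‖ ^ 2 = Real.sin (θo / 2) ^ 2 := by
    simp only [χ₁, Matrix.cons_val_one, Matrix.head_cons, Matrix.cons_val_zero]
    rw [norm_mul, hexp1, one_mul]; exact hnorm0 _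
  have hn21 : ‖χ₂ 1‖ ^ 2 = Real.sin (θo / 2) ^ 2 := by
    simp only [χ₂, Matrix.cons_val_one, Matrix.head_cons, norm_neg, Matrix.cons_val_zero]
    rw [norm_mul, hexp1, one_mul]; exact hnorm0 _
  have hcoh1 : cohVec χ₁ = ![Real.cos (θo / 2) ^ 2, Real.sin (θo / 2) ^ 2] := by
    funext i; fin_cases i
    · simpa [cohVec] using hn10
    · simpa [cohVec] using hn11
  have hcoh2 : cohVec χ₂ = ![Real.cos (θo / 2) ^ 2, Real.sin (θo / 2) ^ 2] := by
    funext i; fin_cases i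
    · simpa [cohVec] using hn20
    · simpa [cohVec] using hn21
  -- diagonal entries
  have hρ00 : (ρ 0 0).re = Real.cos (θo / 2) ^ 2 := by
    rw [hcos2]
    simp [ρ, bloch, pauli1, pauli2, pauli3, Matrix.one_apply,
      -Complex.ofReal_cos, -Complex.ofReal_sin]
    ring
  have hρ11 : (ρ 1 1).re = Real.sin (θo / 2) ^ 2 := by
    rw [hsin2]
    simp [ρ, bloch, pauli1, pauli2, pauli3, Matrix.one_apply,
      -Complex.ofReal_cos, -Complex.ofReal_sin]
    ring
  have hdiagv : (fun i => (ρ i i).re) = ![Real.cos (θo / 2) ^ 2, Real.sin (θo / 2) ^ 2] := by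
    funext i; fin_cases i
    · simpa using hρ00
    · simpa using hρ11
  refine ⟨⟨hp2, hp21, hp11⟩, hpsum, hdecomp, ⟨by rw [hn10, hρ00], by rw [hn20, hρ00], hρ00⟩, ?_⟩
  intro f _hsym hconc
  have heq1 : p₁ * f (cohVec χ₁) + p₂ * f (cohVec χ₂) =
      f ![Real.cos (θo / 2) ^ 2, Real.sin (θo / 2) ^ 2] := by
    rw [hcoh1, hcoh2, ← add_mul, hpsum, one_mul]
  refine ⟨heq1, by rw [hdiagv], ?_, ?_⟩
  · -- membership
    refine ⟨2, ![p₁, p₂], ![χ₁, χ₂], ⟨?_, ?_, ?_, ?_⟩, ?_⟩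
    · intro k; fin_cases k
      · simpa using hp1
      · simpa using hp2
    · rw [Fin.sum_univ_two]; simpa using hpsum
    · intro k; fin_cases k
      · show ∑ i, ‖χ₁ i‖ ^ 2 = 1
        rw [Fin.sum_univ_two, hn10, hn11, hcos2, hsin2]; ring
      · show ∑ i, ‖χ₂ i‖ ^ 2 = 1
        rw [Fin.sum_univ_two, hn20, hn21, hcos2, hsin2]; ring
    · rw [Fin.sum_univ_two]; simpa using hdecomp
    · rw [avgCoh, Fin.sum_univ_two]
      simpa using heq1.symm
  · -- upper bound
    rintro c ⟨m, p, ψ, ⟨hq0, hq1, hψn, hρeq⟩, rfl⟩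
    have hmem : ∀ k, cohVec (ψ k) ∈ stdSimplex ℝ (Fin 2) :=
      fun k => ⟨fun i => by simp only [cohVec]; positivity, hψn k⟩
    have hsum : ∑ k, p k • cohVec (ψ k) = fun i => (ρ i i).re := by
      funext i
      have h := congrArg (fun M => (M i i).re) hρeq
      simp only [Matrix.sum_apply, Matrix.smul_apply, outer, Matrix.vecMulVec_apply,
        smul_eq_mul, Complex.mul_conj'] at h
      rw [Finset.sum_apply]
      rw [h]
      rw [Complex.re_sum]
      refine Finset.sum_congr rfl (fun k _ => ?_)
      simp [cohVec, Complex.mul_conj, Complex.normSq_eq_norm_sq, ← Complex.ofReal_pow, Complex.ofReal_re]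
    have hle : avgCoh f p ψ ≤ f (∑ k, p k • cohVec (ψ k)) := by
      rw [avgCoh]
      exact hconc.le_map_sum (fun k _ => hq0 k) hq1 (fun k _ => hmem k)
    calc avgCoh f p ψ ≤ f (∑ k, p k • cohVec (ψ k)) := hle
      _ = f (fun i => (ρ i i).re) := by rw [hsum]
      _ = f ![Real.cos (θo / 2) ^ 2, Real.sin (θo / 2) ^ 2] := by rw [hdiagv]
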